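/- arXiv:2107.07540 — 7 statements merged into one kernel-verified Lean document; each statement's English description precedes it below -/
import Mathlib

section
/- Let X ⊆ ℝⁿ be a nonempty convex set, Y ⊆ ℝᵐ a nonempty set, and f : ℝⁿ × ℝᵐ → ℝ such that for each y ∈ Y the map x ↦ f(x, y) is differentiable on X and satisfies f(x₂, y) ≥ f(x₁, y) + ⟪∇ₓf(x₁, y), x₂ − x₁⟫ − (L/2)‖x₂ − x₁‖² for all x₁, x₂ ∈ X, and suppose g(x) := sup_{y ∈ Y} f(x, y) is finite on X. If x ∈ X and y* ∈ Y satisfy f(x, y*) = g(x), then v := ∇ₓf(x, y*) is a Fréchet subgradient of g at x relative to X, i.e., liminf_{x' → x, x' ∈ X, x' ≠ x} (g(x') − g(x) − ⟪v, x' − x⟫)/‖x' − x‖ ≥ 0. -/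
/-- At a point where the supremum defining `g(x) = sup_{y ∈ Y} f(x, y)` is
attained by `y*`, the partial gradient `∇ₓf(x, y*)` is a Fréchet subgradient of `g` at `x`
relative to `X`. -/
theorem stmt_3 {n m : ℕ}
    (X : Set (EuclideanSpace ℝ (Fin n))) (Y : Set (EuclideanSpace ℝ (Fin m)))
    (hXne : X.Nonempty) (hXconv : Convex ℝ X) (hYne : Y.Nonempty)
    (L : ℝ)
    (f : EuclideanSpace ℝ (Fin n) → EuclideanSpace ℝ (Fin m) → ℝ)
    (f' : EuclideanSpace ℝ (Fin n) → EuclideanSpace ℝ (Fin m) → EuclideanSpace ℝ (Fin n))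
    (hdiff : ∀ y ∈ Y, ∀ x ∈ X, HasGradientAt (fun x' => f x' y) (f' x y) x)
    (hquad : ∀ y ∈ Y, ∀ x₁ ∈ X, ∀ x₂ ∈ X,
      f x₂ y ≥ f x₁ y + (inner ℝ (f' x₁ y) (x₂ - x₁) : ℝ) - L / 2 * ‖x₂ - x₁‖ ^ 2)
    (g : EuclideanSpace ℝ (Fin n) → ℝ)
    (hg : ∀ x ∈ X, IsLUB ((fun y => f x y) '' Y) (g x))
    (x : EuclideanSpace ℝ (Fin n)) (hx : x ∈ X)
    (ystar : EuclideanSpace ℝ (Fin m)) (hystar : ystar ∈ Y)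
    (hattain : f x ystar = g x) :
    0 ≤ Filter.liminf
      (fun x' => (g x' - g x - (inner ℝ (f' x ystar) (x' - x) : ℝ)) / ‖x' - x‖)
      (nhdsWithin x (X \ {x})) := by
  have key : ∀ x' ∈ X \ {x}, -(L / 2 * ‖x' - x‖) ≤
      (g x' - g x - (inner ℝ (f' x ystar) (x' - x) : ℝ)) / ‖x' - x‖ := by
    intro x' hx'
    have hx'X : x' ∈ X := hx'.1
    have hne : x' - x ≠ 0 := sub_ne_zero.mpr hx'.2
    have hnorm : 0 < ‖x' - x‖ := norm_pos_iff.mpr hne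
    have h1 : f x' ystar ≤ g x' := (hg x' hx'X).1 ⟨ystar, hystar, rfl⟩
    have h2 := hquad ystar hystar x hx x' hx'X
    have hnum : -(L / 2 * ‖x' - x‖ ^ 2) ≤
        g x' - g x - (inner ℝ (f' x ystar) (x' - x) : ℝ) := by
      rw [← hattain]; linarith
    rw [le_div_iff₀ hnorm]
    nlinarith [hnum, sq_nonneg ‖x' - x‖]
  rw [Filter.liminf_eq]
  have hmem : ∀ ε > (0:ℝ), -ε ∈ {a | ∀ᶠ x' in nhdsWithin x (X \ {x}),
      a ≤ (g x' - g x - (inner ℝ (f' x ystar) (x' - x) : ℝ)) / ‖x' - x‖} := by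
    intro ε hε
    have hδ : (0:ℝ) < ε / (|L| + 1) := by positivity
    have hball : ∀ᶠ x' in nhdsWithin x (X \ {x}), dist x' x < ε / (|L| + 1) :=
      Filter.Eventually.filter_mono nhdsWithin_le_nhds
        (Metric.eventually_nhds_iff.mpr ⟨ε / (|L| + 1), hδ, fun {y} h => h⟩)
    have hself : ∀ᶠ x' in nhdsWithin x (X \ {x}), x' ∈ X \ {x} :=
      eventually_mem_nhdsWithin
    filter_upwards [hball, hself] with x' hb hs
    have h1 := key x' hs
    have h2 : ‖x' - x‖ < ε / (|L| + 1) := by rwa [← dist_eq_norm]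
    have hn : (0:ℝ) ≤ ‖x' - x‖ := norm_nonneg _
    have hL : L / 2 * ‖x' - x‖ ≤ (|L| + 1) / 2 * ‖x' - x‖ := by
      have : L ≤ |L| + 1 := (le_abs_self L).trans (by linarith)
      nlinarith
    have : (|L| + 1) / 2 * ‖x' - x‖ < ε := by
      have := (lt_div_iff₀ (by positivity : (0:ℝ) < |L| + 1)).mp h2
      nlinarith [abs_nonneg L]
    linarith
  by_cases hb : BddAbove {a | ∀ᶠ x' in nhdsWithin x (X \ {x}),
      a ≤ (g x' - g x - (inner ℝ (f' x ystar) (x' - x) : ℝ)) / ‖x' - x‖}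
  · refine le_of_forall_pos_le_add fun ε hε => ?_
    have := le_csSup hb (hmem ε hε)
    linarith
  · rw [Real.sSup_of_not_bddAbove hb]
end

section
/- Let X ⊆ ℝⁿ be a nonempty convex set, Y ⊆ ℝᵐ a nonempty compact set, and f : ℝⁿ × ℝᵐ → ℝ continuous such that for each y ∈ Y the map x ↦ f(x, y) is differentiable on X and satisfies f(x₂, y) ≥ f(x₁, y) + ⟪∇ₓf(x₁, y), x₂ − x₁⟫ − (L/2)‖x₂ − x₁‖² for all x₁, x₂ ∈ X. Then g(x) := max_{y ∈ Y} f(x, y) is L-weakly convex on X, i.e., the function x ↦ g(x) + (L/2)‖x‖² is convex on X. -/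
/-- The pointwise maximum `g(x) = max_{y ∈ Y} f(x, y)` of a family of
functions satisfying the `L`-smoothness lower quadratic bound is `L`-weakly convex on `X`,
i.e. `x ↦ g(x) + (L/2)‖x‖²` is convex on `X`. -/
theorem stmt_4 {n m : ℕ}
    (X : Set (EuclideanSpace ℝ (Fin n))) (Y : Set (EuclideanSpace ℝ (Fin m)))
    (hXne : X.Nonempty) (hXconv : Convex ℝ X)
    (hYne : Y.Nonempty) (hYcomp : IsCompact Y)
    (L : ℝ)
    (f : EuclideanSpace ℝ (Fin n) → EuclideanSpace ℝ (Fin m) → ℝ)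
    (hfc : Continuous fun p : EuclideanSpace ℝ (Fin n) × EuclideanSpace ℝ (Fin m) => f p.1 p.2)
    (f' : EuclideanSpace ℝ (Fin n) → EuclideanSpace ℝ (Fin m) → EuclideanSpace ℝ (Fin n))
    (hdiff : ∀ y ∈ Y, ∀ x ∈ X, HasGradientAt (fun x' => f x' y) (f' x y) x)
    (hquad : ∀ y ∈ Y, ∀ x₁ ∈ X, ∀ x₂ ∈ X,
      f x₂ y ≥ f x₁ y + (inner ℝ (f' x₁ y) (x₂ - x₁) : ℝ) - L / 2 * ‖x₂ - x₁‖ ^ 2)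
    (g : EuclideanSpace ℝ (Fin n) → ℝ)
    (hg : ∀ x, IsGreatest ((fun y => f x y) '' Y) (g x)) :
    ConvexOn ℝ X (fun x => g x + L / 2 * ‖x‖ ^ 2) := by
  refine ⟨hXconv, fun x₁ hx₁ x₂ hx₂ a b ha hb hab => ?_⟩
  set x : EuclideanSpace ℝ (Fin n) := a • x₁ + b • x₂ with hxdef
  have hx : x ∈ X := hXconv hx₁ hx₂ ha hb hab
  obtain ⟨y, hy, hfy⟩ := (hg x).1
  simp only at hfy
  -- subgradient inequality for φ(z) = f z y + L/2 ‖z‖²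
  have key : ∀ z ∈ X,
      f z y + L / 2 * ‖z‖ ^ 2 ≥
        f x y + L / 2 * ‖x‖ ^ 2 + (inner ℝ (f' x y + L • x) (z - x) : ℝ) := by
    intro z hz
    have hq := hquad y hy x hx z hz
    have hns : ‖z - x‖ ^ 2 = ‖z‖ ^ 2 - 2 * (inner ℝ x z : ℝ) + ‖x‖ ^ 2 := by
      rw [norm_sub_sq_real]; ring_nf; rw [real_inner_comm]; ring
    have hxs : (inner ℝ x (z - x) : ℝ) = (inner ℝ x z : ℝ) - ‖x‖ ^ 2 := by
      rw [inner_sub_right, real_inner_self_eq_norm_sq]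
    have hinner : (inner ℝ (f' x y + L • x) (z - x) : ℝ)
        = (inner ℝ (f' x y) (z - x) : ℝ) + L * ((inner ℝ x z : ℝ) - ‖x‖ ^ 2) := by
      rw [inner_add_left, real_inner_smul_left, hxs]
    rw [hinner]
    rw [hns] at hq
    linarith
  have h1 := key x₁ hx₁
  have h2 := key x₂ hx₂
  have hg1 : f x₁ y ≤ g x₁ := (hg x₁).2 ⟨y, hy, rfl⟩
  have hg2 : f x₂ y ≤ g x₂ := (hg x₂).2 ⟨y, hy, rfl⟩
  have hxx : a • x + b • x = x := by rw [← add_smul, hab, one_smul]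
  have hzero : a • (x₁ - x) + b • (x₂ - x) = 0 := by
    calc a • (x₁ - x) + b • (x₂ - x)
        = (a • x₁ + b • x₂) - (a • x + b • x) := by rw [smul_sub, smul_sub]; abel
      _ = x - x := by rw [hxx, hxdef]
      _ = 0 := sub_self x
  have hsum : a * (inner ℝ (f' x y + L • x) (x₁ - x) : ℝ)
      + b * (inner ℝ (f' x y + L • x) (x₂ - x) : ℝ) = 0 := by
    rw [← real_inner_smul_right, ← real_inner_smul_right, ← inner_add_right, hzero,
      inner_zero_right]
  have h3 : a * (f x y + L / 2 * ‖x‖ ^ 2) + b * (f x y + L / 2 * ‖x‖ ^ 2)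
      = f x y + L / 2 * ‖x‖ ^ 2 := by rw [← add_mul, hab, one_mul]
  simp only [smul_eq_mul]
  rw [← hfy]
  linarith [mul_le_mul_of_nonneg_left h1.le ha, mul_le_mul_of_nonneg_left h2.le hb,
    mul_le_mul_of_nonneg_left hg1 ha, mul_le_mul_of_nonneg_left hg2 hb, hsum, h3]
end

section
/- Let X ⊆ ℝⁿ be a nonempty compact convex set, let g : ℝⁿ → ℝ be continuous on X and L-weakly convex on X (g + (L/2)‖·‖² convex on X) for some L > 0, let 0 < λ < 1/L, let x ∈ ℝⁿ, and let x̂ ∈ X be the unique minimizer over X of x' ↦ g(x') + (1/(2λ))‖x' − x‖². Then the vector u := (x − x̂)/λ is a Fréchet subgradient of g at x̂ relative to X, i.e., liminf_{x' → x̂, x' ∈ X, x' ≠ x̂} (g(x') − g(x̂) − ⟪u, x' − x̂⟫)/‖x' − x̂‖ ≥ 0. Consequently, if ‖x − x̂‖ ≤ λ·ε for some ε > 0, then x is within distance λ·ε of a point x̂ of X that admits a Fréchet subgradient of g relative to X of norm at most ε. -/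
open Filter

/-- Key liminf lemma: if `u` satisfies the proximal-type lower bound, the liminf is
nonnegative. -/
theorem aux_liminf {n : ℕ} {X : Set (EuclideanSpace ℝ (Fin n))}
    {g : EuclideanSpace ℝ (Fin n) → ℝ} {lam : ℝ} (hlam : 0 < lam)
    {xhat u : EuclideanSpace ℝ (Fin n)}
    (key : ∀ z ∈ X, -(1 / (2 * lam)) * ‖z - xhat‖ ^ 2
      ≤ g z - g xhat - (inner ℝ u (z - xhat) : ℝ)) :
    0 ≤ Filter.liminf
        (fun x' => (g x' - g xhat - (inner ℝ u (x' - xhat) : ℝ)) / ‖x' - xhat‖)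
        (nhdsWithin xhat (X \ {xhat})) := by
  set l := nhdsWithin xhat (X \ {xhat}) with hl
  set f : EuclideanSpace ℝ (Fin n) → ℝ :=
    fun x' => (g x' - g xhat - (inner ℝ u (x' - xhat) : ℝ)) / ‖x' - xhat‖ with hf
  -- pointwise lower bound on the relevant set
  have flb : ∀ z ∈ X \ {xhat}, -(1 / (2 * lam)) * ‖z - xhat‖ ≤ f z := by
    rintro z ⟨hzX, hzne⟩
    have hzne' : z ≠ xhat := by simpa using hzne
    have hpos : 0 < ‖z - xhat‖ := by
      rw [norm_pos_iff]; exact sub_ne_zero.mpr hzne'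
    rw [hf, le_div_iff₀ hpos]
    calc -(1 / (2 * lam)) * ‖z - xhat‖ * ‖z - xhat‖
        = -(1 / (2 * lam)) * ‖z - xhat‖ ^ 2 := by ring
      _ ≤ _ := key z hzX
  have flb_ev : ∀ᶠ z in l, -(1 / (2 * lam)) * ‖z - xhat‖ ≤ f z :=
    eventually_nhdsWithin_of_forall flb
  -- the lower bound function tends to 0
  have htendnorm : Tendsto (fun z : EuclideanSpace ℝ (Fin n) => ‖z - xhat‖) l (nhds 0) := by
    have : Tendsto (fun z : EuclideanSpace ℝ (Fin n) => ‖z - xhat‖) (nhds xhat)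
        (nhds ‖xhat - xhat‖) :=
      (continuous_norm.comp (continuous_id.sub continuous_const)).tendsto xhat
    simpa using this.mono_left nhdsWithin_le_nhds
  have htend : Tendsto (fun z : EuclideanSpace ℝ (Fin n) => -(1 / (2 * lam)) * ‖z - xhat‖)
      l (nhds 0) := by
    have := htendnorm.const_mul (-(1 / (2 * lam)))
    simpa using this
  by_cases hbdd : BddAbove {a : ℝ | ∀ᶠ z in l, a ≤ f z}
  · -- filter is nontrivial (otherwise the set is univ, unbounded)
    have hne : l.NeBot := by
      rcases Filter.eq_or_neBot l with h | h
      · exfalso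
        apply (not_bddAbove_univ) (by simpa [h] using hbdd : BddAbove (Set.univ : Set ℝ))
      · exact h
    have hcob : l.IsCoboundedUnder (· ≥ ·) f := by
      obtain ⟨b, hb⟩ := hbdd
      exact ⟨b, fun a ha => hb (by simpa [Filter.eventually_map] using ha)⟩
    have hbound : l.IsBoundedUnder (· ≥ ·)
        (fun z : EuclideanSpace ℝ (Fin n) => -(1 / (2 * lam)) * ‖z - xhat‖) := by
      refine ⟨-(1 / (2 * lam)), ?_⟩
      have h1 : ∀ᶠ z in l, ‖z - xhat‖ ≤ 1 :=
        htendnorm.eventually_le_const (by norm_num)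
      refine (Filter.eventually_map.mpr ?_)
      filter_upwards [h1] with z hz
      have h2 : 0 < 1 / (2 * lam) := by positivity
      nlinarith [norm_nonneg (z - xhat)]
    have hle : Filter.liminf (fun z : EuclideanSpace ℝ (Fin n) =>
        -(1 / (2 * lam)) * ‖z - xhat‖) l ≤ Filter.liminf f l :=
      Filter.liminf_le_liminf flb_ev hbound hcob
    rwa [htend.liminf_eq] at hle
  · rw [Filter.liminf_eq, Real.sSup_of_not_bddAbove hbdd]

/-- If `x̂` is the unique minimizer over `X` of `x' ↦ g(x') + (1/(2λ))‖x'−x‖²`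
for a continuous `L`-weakly convex `g` on a nonempty compact convex `X` with `0 < λ < 1/L`,
then `u = (x − x̂)/λ` is a Fréchet subgradient of `g` at `x̂` relative to `X`; consequently,
if `‖x − x̂‖ ≤ λ·ε`, then `x` is within distance `λ·ε` of a point of `X` admitting a
Fréchet subgradient of `g` relative to `X` of norm at most `ε`. -/
theorem stmt_7 {n : ℕ}
    (X : Set (EuclideanSpace ℝ (Fin n)))
    (hXne : X.Nonempty) (hXcomp : IsCompact X) (hXconv : Convex ℝ X)
    (L : ℝ) (hL : 0 < L)
    (g : EuclideanSpace ℝ (Fin n) → ℝ) (hgc : ContinuousOn g X)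
    (hwc : ConvexOn ℝ X (fun x => g x + L / 2 * ‖x‖ ^ 2))
    (lam : ℝ) (hlam : 0 < lam) (hlamL : lam < 1 / L)
    (x : EuclideanSpace ℝ (Fin n))
    (xhat : EuclideanSpace ℝ (Fin n)) (hxhatmem : xhat ∈ X)
    (hxhatmin : ∀ z ∈ X,
      g xhat + 1 / (2 * lam) * ‖xhat - x‖ ^ 2 ≤ g z + 1 / (2 * lam) * ‖z - x‖ ^ 2) :
    (0 ≤ Filter.liminf
        (fun x' => (g x' - g xhat - (inner ℝ ((1 / lam) • (x - xhat)) (x' - xhat) : ℝ)) / ‖x' - xhat‖)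
        (nhdsWithin xhat (X \ {xhat}))) ∧
    ∀ ε : ℝ, 0 < ε → ‖x - xhat‖ ≤ lam * ε →
      ∃ z ∈ X, ‖x - z‖ ≤ lam * ε ∧ ∃ u : EuclideanSpace ℝ (Fin n), ‖u‖ ≤ ε ∧
        0 ≤ Filter.liminf
          (fun x' => (g x' - g z - (inner ℝ u (x' - z) : ℝ)) / ‖x' - z‖)
          (nhdsWithin z (X \ {z})) := by
  set u : EuclideanSpace ℝ (Fin n) := (1 / lam) • (x - xhat) with hu
  have key : ∀ z ∈ X, -(1 / (2 * lam)) * ‖z - xhat‖ ^ 2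
      ≤ g z - g xhat - (inner ℝ u (z - xhat) : ℝ) := by
    intro z hz
    have h1 := hxhatmin z hz
    have expand : ‖z - x‖ ^ 2
        = ‖z - xhat‖ ^ 2 + 2 * (inner ℝ (z - xhat) (xhat - x) : ℝ) + ‖xhat - x‖ ^ 2 := by
      have hdec : z - x = (z - xhat) + (xhat - x) := by abel
      rw [hdec, norm_add_sq_real]
    have hinner : (inner ℝ u (z - xhat) : ℝ)
        = (1 / lam) * (inner ℝ (x - xhat) (z - xhat) : ℝ) := by
      rw [hu, real_inner_smul_left]
    have hsym : (inner ℝ (z - xhat) (xhat - x) : ℝ) = -(inner ℝ (x - xhat) (z - xhat) : ℝ) := by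
      rw [real_inner_comm]
      have hneg : xhat - x = -(x - xhat) := by abel
      rw [hneg, inner_neg_left]
    have hlamne : (1 : ℝ) / lam = 2 * (1 / (2 * lam)) := by
      field_simp
    rw [hinner, hlamne]
    rw [expand, hsym] at h1
    linarith
  have part1 := aux_liminf hlam key
  refine ⟨part1, fun ε hε hle => ⟨xhat, hxhatmem, hle, u, ?_, part1⟩⟩
  rw [hu, norm_smul, Real.norm_eq_abs, abs_of_pos (by positivity : (0:ℝ) < 1 / lam)]
  rw [div_mul_eq_mul_div, one_mul, div_le_iff₀ hlam]
  linarith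
end

section
/- Let X ⊆ ℝⁿ be a nonempty compact convex set, Y ⊆ ℝᵐ a nonempty compact set, L > 0, and f : ℝⁿ × ℝᵐ → ℝ continuous such that for each y ∈ Y the map x ↦ f(x, y) is differentiable on X and satisfies f(x₂, y) ≥ f(x₁, y) + ⟪∇ₓf(x₁, y), x₂ − x₁⟫ − (L/2)‖x₂ − x₁‖² for all x₁, x₂ ∈ X. Define g(x) := max_{y ∈ Y} f(x, y). Fix x ∈ X, let y* ∈ Y satisfy f(x, y*) = g(x), and let x̂ ∈ X be the unique minimizer over X of x' ↦ g(x') + L‖x' − x‖². Then ⟪∇ₓf(x, y*), x̂ − x⟫ ≤ −L‖x̂ − x‖². -/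
/-- With `g(x) = max_{y ∈ Y} f(x, y)`, `y*` attaining the maximum at `x`, and
`x̂` the unique minimizer over `X` of `x' ↦ g(x') + L‖x' − x‖²`, one has
`⟪∇ₓf(x, y*), x̂ − x⟫ ≤ −L‖x̂ − x‖²`. -/
theorem stmt_9 {n m : ℕ}
    (X : Set (EuclideanSpace ℝ (Fin n))) (Y : Set (EuclideanSpace ℝ (Fin m)))
    (hXne : X.Nonempty) (hXcomp : IsCompact X) (hXconv : Convex ℝ X)
    (hYne : Y.Nonempty) (hYcomp : IsCompact Y)
    (L : ℝ) (hL : 0 < L)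
    (f : EuclideanSpace ℝ (Fin n) → EuclideanSpace ℝ (Fin m) → ℝ)
    (hfc : Continuous fun p : EuclideanSpace ℝ (Fin n) × EuclideanSpace ℝ (Fin m) => f p.1 p.2)
    (f' : EuclideanSpace ℝ (Fin n) → EuclideanSpace ℝ (Fin m) → EuclideanSpace ℝ (Fin n))
    (hdiff : ∀ y ∈ Y, ∀ x ∈ X, HasGradientAt (fun x' => f x' y) (f' x y) x)
    (hquad : ∀ y ∈ Y, ∀ x₁ ∈ X, ∀ x₂ ∈ X,
      f x₂ y ≥ f x₁ y + (inner ℝ (f' x₁ y) (x₂ - x₁) : ℝ) - L / 2 * ‖x₂ - x₁‖ ^ 2)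
    (g : EuclideanSpace ℝ (Fin n) → ℝ)
    (hg : ∀ x, IsGreatest ((fun y => f x y) '' Y) (g x))
    (x : EuclideanSpace ℝ (Fin n)) (hx : x ∈ X)
    (ystar : EuclideanSpace ℝ (Fin m)) (hystar : ystar ∈ Y)
    (hattain : f x ystar = g x)
    (xhat : EuclideanSpace ℝ (Fin n)) (hxhatmem : xhat ∈ X)
    (hxhatmin : ∀ z ∈ X, g xhat + L * ‖xhat - x‖ ^ 2 ≤ g z + L * ‖z - x‖ ^ 2) :
    (inner ℝ (f' x ystar) (xhat - x) : ℝ) ≤ -L * ‖xhat - x‖ ^ 2 := by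
  set r : ℝ := ‖xhat - x‖ with hr
  have hr0 : 0 ≤ r := norm_nonneg _
  rcases eq_or_lt_of_le hr0 with hr0' | hrpos
  · -- r = 0, so xhat = x
    have hx0 : xhat - x = 0 := by
      rw [← norm_eq_zero]; exact hr0'.symm
    rw [hx0]
    simp [← hr0']
  · -- key lemma for t ∈ (0,1)
    have key : ∀ t : ℝ, 0 < t → t < 1 →
        g xhat ≤ g x - L * r ^ 2 - L / 2 * t * r ^ 2 := by
      intro t ht0 ht1
      set z : EuclideanSpace ℝ (Fin n) := x + t • (xhat - x) with hz
      have hzX : z ∈ X := by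
        have := hXconv hx hxhatmem (by linarith : (0:ℝ) ≤ 1 - t) (le_of_lt ht0)
          (by ring : (1 - t) + t = 1)
        convert this using 1
        rw [hz]
        module
      obtain ⟨y, hyY, hyz⟩ := (hg z).1
      have h1 := hquad y hyY z hzX x hx
      have h2 := hquad y hyY z hzX xhat hxhatmem
      have hxz : x - z = (-t) • (xhat - x) := by rw [hz]; module
      have hxhz : xhat - z = (1 - t) • (xhat - x) := by rw [hz]; module
      have hzx : z - x = t • (xhat - x) := by rw [hz]; module
      have hnxz : ‖x - z‖ = t * r := by
        rw [hxz, norm_smul, Real.norm_eq_abs, abs_neg, abs_of_pos ht0]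
      have hnxhz : ‖xhat - z‖ = (1 - t) * r := by
        rw [hxhz, norm_smul, Real.norm_eq_abs, abs_of_pos (by linarith)]
      have hnzx : ‖z - x‖ = t * r := by
        rw [hzx, norm_smul, Real.norm_eq_abs, abs_of_pos ht0]
      rw [hxz, real_inner_smul_right, ← hxz, hnxz] at h1
      rw [hxhz, real_inner_smul_right, ← hxhz, hnxhz] at h2
      have hfxg : f x y ≤ g x := (hg x).2 ⟨y, hyY, rfl⟩
      have hfxhg : f xhat y ≤ g xhat := (hg xhat).2 ⟨y, hyY, rfl⟩
      have hmin := hxhatmin z hzX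
      rw [hnzx] at hmin
      simp only [] at hyz
      rw [hyz] at h1 h2
      nlinarith [mul_le_mul_of_nonneg_left hfxg (by linarith : (0:ℝ) ≤ 1 - t),
        mul_le_mul_of_nonneg_left hfxhg (le_of_lt ht0),
        mul_le_mul_of_nonneg_left h1 (by linarith : (0:ℝ) ≤ 1 - t),
        mul_le_mul_of_nonneg_left h2 (le_of_lt ht0), sq_nonneg r, sq_nonneg (1 - t)]
    -- take limit t → 1 by contradiction
    set A : ℝ := g x - L * r ^ 2 - g xhat with hA
    have hkey' : ∀ t : ℝ, 0 < t → t < 1 → L / 2 * t * r ^ 2 ≤ A := by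
      intro t ht0 ht1
      have := key t ht0 ht1
      rw [hA]; linarith
    have hlim : L / 2 * r ^ 2 ≤ A := by
      by_contra hcon
      push_neg at hcon
      have hc : 0 < L / 2 * r ^ 2 := by positivity
      have hA0 : 0 < A := lt_of_lt_of_le (by nlinarith) (hkey' (1/2) (by norm_num) (by norm_num))
      set t : ℝ := (A / (L / 2 * r ^ 2) + 1) / 2 with ht
      have hq0 : 0 < A / (L / 2 * r ^ 2) := div_pos hA0 hc
      have hq1 : A / (L / 2 * r ^ 2) < 1 := (div_lt_one hc).mpr hcon
      have ht0 : 0 < t := by rw [ht]; linarith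
      have ht1 : t < 1 := by rw [ht]; linarith
      have := hkey' t ht0 ht1
      have htgt : A / (L / 2 * r ^ 2) < t := by rw [ht]; linarith
      have : A < L / 2 * t * r ^ 2 := by
        have := (div_lt_iff₀ hc).mp htgt
        nlinarith
      linarith
    -- combine with quadratic bound at x with ystar
    have h3 := hquad ystar hystar x hx xhat hxhatmem
    have hfxhg : f xhat ystar ≤ g xhat := (hg xhat).2 ⟨ystar, hystar, rfl⟩
    rw [hattain] at h3
    rw [hA] at hlim
    linarith
end

section
/- Let X ⊆ ℝⁿ be a nonempty compact convex set, Y ⊆ ℝᵐ a nonempty compact set, L, M, α > 0, and f : ℝⁿ × ℝᵐ → ℝ continuous such that for each y ∈ Y the map x ↦ f(x, y) is differentiable on X with ‖∇ₓf(x, y)‖ ≤ M for all x ∈ X, y ∈ Y, and satisfying f(x₂, y) ≥ f(x₁, y) + ⟪∇ₓf(x₁, y), x₂ − x₁⟫ − (L/2)‖x₂ − x₁‖² for all x₁, x₂ ∈ X, y ∈ Y. Define g(x) := max_{y ∈ Y} f(x, y), Φ(x) := min_{x' ∈ X} ( g(x') + L‖x' − x‖² ), and let x̂(x) denote the unique minimizer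 defining Φ(x). Fix x ∈ X, let y* ∈ Y satisfy f(x, y*) = g(x), and let x⁺ be the unique point of X closest (in Euclidean norm) to x − α∇ₓf(x, y*). Then Φ(x⁺) ≤ Φ(x) − 2αL²‖x̂(x) − x‖² + α²LM². -/
set_option maxHeartbeats 1000000


/-- Per-iteration descent inequality for the projected subgradient step:
`Φ(x⁺) ≤ Φ(x) − 2αL²‖x̂(x) − x‖² + α²LM²`, where `Φ` is the Moreau envelope
`Φ(x) = min_{x' ∈ X}(g(x') + L‖x' − x‖²)` with minimizer `x̂(x)`, and `x⁺` is the
Euclidean projection of `x − α∇ₓf(x, y*)` onto `X`. -/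
theorem stmt_10 {n m : ℕ}
    (X : Set (EuclideanSpace ℝ (Fin n))) (Y : Set (EuclideanSpace ℝ (Fin m)))
    (hXne : X.Nonempty) (hXcomp : IsCompact X) (hXconv : Convex ℝ X)
    (hYne : Y.Nonempty) (hYcomp : IsCompact Y)
    (L M α : ℝ) (hL : 0 < L) (hM : 0 < M) (hα : 0 < α)
    (f : EuclideanSpace ℝ (Fin n) → EuclideanSpace ℝ (Fin m) → ℝ)
    (hfc : Continuous fun p : EuclideanSpace ℝ (Fin n) × EuclideanSpace ℝ (Fin m) => f p.1 p.2)
    (f' : EuclideanSpace ℝ (Fin n) → EuclideanSpace ℝ (Fin m) → EuclideanSpace ℝ (Fin n))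
    (hdiff : ∀ y ∈ Y, ∀ x ∈ X, HasGradientAt (fun x' => f x' y) (f' x y) x)
    (hgradbd : ∀ x ∈ X, ∀ y ∈ Y, ‖f' x y‖ ≤ M)
    (hquad : ∀ y ∈ Y, ∀ x₁ ∈ X, ∀ x₂ ∈ X,
      f x₂ y ≥ f x₁ y + (inner ℝ (f' x₁ y) (x₂ - x₁) : ℝ) - L / 2 * ‖x₂ - x₁‖ ^ 2)
    (g : EuclideanSpace ℝ (Fin n) → ℝ)
    (hg : ∀ x, IsGreatest ((fun y => f x y) '' Y) (g x))
    (Φ : EuclideanSpace ℝ (Fin n) → ℝ)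
    (xhat : EuclideanSpace ℝ (Fin n) → EuclideanSpace ℝ (Fin n))
    (hxhatmem : ∀ x, xhat x ∈ X)
    (hxhatmin : ∀ x, ∀ z ∈ X,
      g (xhat x) + L * ‖xhat x - x‖ ^ 2 ≤ g z + L * ‖z - x‖ ^ 2)
    (hΦ : ∀ x, Φ x = g (xhat x) + L * ‖xhat x - x‖ ^ 2)
    (x : EuclideanSpace ℝ (Fin n)) (hx : x ∈ X)
    (ystar : EuclideanSpace ℝ (Fin m)) (hystar : ystar ∈ Y)
    (hattain : f x ystar = g x)
    (xp : EuclideanSpace ℝ (Fin n)) (hxpmem : xp ∈ X)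
    (hxpproj : ∀ z ∈ X,
      ‖xp - (x - α • f' x ystar)‖ ≤ ‖z - (x - α • f' x ystar)‖) :
    Φ xp ≤ Φ x - 2 * α * L ^ 2 * ‖xhat x - x‖ ^ 2 + α ^ 2 * L * M ^ 2 := by
  classical
  set D := ‖xhat x - x‖ ^ 2 with hD
  have hD0 : 0 ≤ D := by positivity
  -- auxiliary: if a ≤ b + t*c for all small positive t, then a ≤ b
  have aux : ∀ a b c : ℝ, (∀ t : ℝ, 0 < t → t ≤ 1 → a ≤ b + t * c) → a ≤ b := by
    intro a b c h
    rcases le_or_gt c 0 with hc | hc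
    · have := h 1 one_pos le_rfl; nlinarith
    · refine le_of_forall_pos_le_add ?_
      intro ε hε
      have ht0 : 0 < min 1 (ε / c) := lt_min one_pos (by positivity)
      have h1 := h (min 1 (ε / c)) ht0 (min_le_left _ _)
      have h2 : min 1 (ε / c) * c ≤ ε := by
        have h3 := min_le_right 1 (ε / c)
        calc min 1 (ε / c) * c ≤ (ε / c) * c := by nlinarith
          _ = ε := by field_simp
      linarith
  -- Claim B : g x ≥ g (xhat x) + (3L/2) D
  have claimB : g (xhat x) + 3 * L / 2 * D ≤ g x := by
    have key : ∀ t : ℝ, 0 < t → t ≤ 1 →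
        g (xhat x) + 3 * L / 2 * D ≤ g x + t * (L / 2 * D) := by
      intro t ht ht1
      set z : EuclideanSpace ℝ (Fin n) := (1 - t) • xhat x + t • x with hz
      have hzX : z ∈ X := hXconv (hxhatmem x) hx (by linarith) ht.le (by ring)
      obtain ⟨yt, hytY, hyt⟩ := (hg z).1
      have A1 := hquad yt hytY z hzX (xhat x) (hxhatmem x)
      have A2 := hquad yt hytY z hzX x hx
      have e1 : xhat x - z = t • (xhat x - x) := by rw [hz]; module
      have e2 : x - z = (1 - t) • (x - xhat x) := by rw [hz]; module
      have e3 : z - x = (1 - t) • (xhat x - x) := by rw [hz]; module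
      have n1 : ‖xhat x - z‖ ^ 2 = t ^ 2 * D := by
        rw [e1, norm_smul, Real.norm_eq_abs, mul_pow, sq_abs]
      have n2 : ‖x - z‖ ^ 2 = (1 - t) ^ 2 * D := by
        rw [e2, norm_smul, Real.norm_eq_abs, mul_pow, sq_abs, norm_sub_rev]
      have n3 : ‖z - x‖ ^ 2 = (1 - t) ^ 2 * D := by
        rw [e3, norm_smul, Real.norm_eq_abs, mul_pow, sq_abs]
      have E : (1 - t) * (inner ℝ (f' z yt) (xhat x - z) : ℝ)
          + t * (inner ℝ (f' z yt) (x - z) : ℝ) = 0 := by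
        rw [← real_inner_smul_right, ← real_inner_smul_right, ← inner_add_right]
        have : (1 - t) • (xhat x - z) + t • (x - z) = 0 := by rw [hz]; module
        rw [this, inner_zero_right]
      have B1 : f (xhat x) yt ≤ g (xhat x) := (hg (xhat x)).2 ⟨yt, hytY, rfl⟩
      have B2 : f x yt ≤ g x := (hg x).2 ⟨yt, hytY, rfl⟩
      have C := hxhatmin x z hzX
      rw [n3, ← hyt] at C
      rw [n1] at A1
      rw [n2] at A2
      have hA1' : f z yt + (inner ℝ (f' z yt) (xhat x - z) : ℝ) - L / 2 * (t ^ 2 * D)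
          ≤ g (xhat x) := by linarith
      have hA2' : f z yt + (inner ℝ (f' z yt) (x - z) : ℝ) - L / 2 * ((1 - t) ^ 2 * D)
          ≤ g x := by linarith
      have m1 := mul_le_mul_of_nonneg_left hA1' (by linarith : (0:ℝ) ≤ 1 - t)
      have m2 := mul_le_mul_of_nonneg_left hA2' ht.le
      have tgoal : t * (g (xhat x) + 3 * L / 2 * D) ≤ t * (g x + t * (L / 2 * D)) := by
        nlinarith [m1, m2, C, E]
      exact le_of_mul_le_mul_left tgoal ht
    exact aux _ _ _ key
  set ζ := f' x ystar with hζ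
  set v : EuclideanSpace ℝ (Fin n) := x - α • ζ with hv
  -- variational inequality for the projection
  have VI : ∀ z ∈ X, (inner ℝ (v - xp) (z - xp) : ℝ) ≤ 0 := by
    intro z hz
    have key : ∀ t : ℝ, 0 < t → t ≤ 1 →
        2 * (inner ℝ (v - xp) (z - xp) : ℝ) ≤ 0 + t * ‖z - xp‖ ^ 2 := by
      intro t ht ht1
      set w : EuclideanSpace ℝ (Fin n) := (1 - t) • xp + t • z with hw
      have hwX : w ∈ X := hXconv hxpmem hz (by linarith) ht.le (by ring)
      have hp := hxpproj w hwX
      have hsq : ‖xp - v‖ ^ 2 ≤ ‖w - v‖ ^ 2 := by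
        have h0 : (0:ℝ) ≤ ‖xp - v‖ := norm_nonneg _
        nlinarith [hp]
      have ew : w - v = (xp - v) + t • (z - xp) := by rw [hw]; module
      have expand : ‖w - v‖ ^ 2 = ‖xp - v‖ ^ 2
          + 2 * (t * (inner ℝ (xp - v) (z - xp) : ℝ)) + t ^ 2 * ‖z - xp‖ ^ 2 := by
        rw [ew, norm_add_sq_real, real_inner_smul_right, norm_smul,
          Real.norm_eq_abs, mul_pow, sq_abs]
      have hinner : (inner ℝ (v - xp) (z - xp) : ℝ) = - (inner ℝ (xp - v) (z - xp) : ℝ) := by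
        rw [← inner_neg_left]; congr 1; module
      rw [hinner]
      have h4 : 0 ≤ 2 * (t * (inner ℝ (xp - v) (z - xp) : ℝ)) + t ^ 2 * ‖z - xp‖ ^ 2 := by
        linarith [hsq, expand]
      nlinarith [h4]
    have := aux _ _ _ key
    linarith
  -- nonexpansiveness consequence: ‖xhat x - xp‖² ≤ ‖xhat x - v‖²
  have hne : ‖xhat x - xp‖ ^ 2 ≤ ‖xhat x - v‖ ^ 2 := by
    have hvi := VI (xhat x) (hxhatmem x)
    have e : xhat x - v = (xhat x - xp) + (xp - v) := by module
    have expand : ‖xhat x - v‖ ^ 2 = ‖xhat x - xp‖ ^ 2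
        + 2 * (inner ℝ (xhat x - xp) (xp - v) : ℝ) + ‖xp - v‖ ^ 2 := by
      rw [e, norm_add_sq_real]
    have hinner : (inner ℝ (xhat x - xp) (xp - v) : ℝ) = - (inner ℝ (v - xp) (xhat x - xp) : ℝ) := by
      rw [← inner_neg_left, real_inner_comm]; congr 1; module
    nlinarith [hvi, expand, sq_nonneg ‖xp - v‖]
  -- expand ‖xhat x - v‖²
  have ev : xhat x - v = (xhat x - x) + α • ζ := by rw [hv]; module
  have hMb : ‖ζ‖ ≤ M := hgradbd x hx ystar hystar
  have expandv : ‖xhat x - v‖ ^ 2 = D + 2 * (α * (inner ℝ (xhat x - x) ζ : ℝ)) + α ^ 2 * ‖ζ‖ ^ 2 := by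
    rw [ev, norm_add_sq_real, real_inner_smul_right, norm_smul, Real.norm_eq_abs,
      mul_pow, sq_abs]
  -- inner product bound: ⟪ζ, xhat x − x⟫ ≤ −L D
  have hib : (inner ℝ (xhat x - x) ζ : ℝ) ≤ -(L * D) := by
    have hq := hquad ystar hystar x hx (xhat x) (hxhatmem x)
    have B1 : f (xhat x) ystar ≤ g (xhat x) := (hg (xhat x)).2 ⟨ystar, hystar, rfl⟩
    rw [real_inner_comm]
    rw [hattain] at hq
    rw [← hζ, ← hD] at hq
    linarith [hq, claimB]
  -- combine everything
  have step1 : Φ xp ≤ g (xhat x) + L * ‖xhat x - xp‖ ^ 2 := by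
    rw [hΦ xp]; exact hxhatmin xp (xhat x) (hxhatmem x)
  have hΦx : Φ x = g (xhat x) + L * D := hΦ x
  have hζsq : ‖ζ‖ ^ 2 ≤ M ^ 2 := by nlinarith [norm_nonneg ζ]
  nlinarith [step1, hne, expandv, hib, hζsq, mul_le_mul_of_nonneg_left hib (by positivity : (0:ℝ) ≤ 2 * α * L), mul_le_mul_of_nonneg_left hζsq (by positivity : (0:ℝ) ≤ α ^ 2 * L), hne.trans_eq expandv, mul_le_mul_of_nonneg_left (hne.trans_eq expandv) hL.le]
end

section
/- Let X ⊆ ℝⁿ be a nonempty compact convex set, Y ⊆ ℝᵐ a nonempty compact set, L, M, α > 0, and f : ℝⁿ × ℝᵐ → ℝ continuous such that for each y ∈ Y the map x ↦ f(x, y) is differentiable on X with ‖∇ₓf(x, y)‖ ≤ M for all x ∈ X, y ∈ Y, and satisfying f(x₂, y) ≥ f(x₁, y) + ⟪∇ₓf(x₁, y), x₂ − x₁⟫ − (L/2)‖x₂ − x₁‖² for all x₁, x₂ ∈ X, y ∈ Y. Define g(x) := max_{y ∈ Y} f(x, y), Φ(x) := min_{x' ∈ X} ( g(x') + L‖x'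 − x‖² ) with unique minimizer x̂(x). Consider iterates x⁽⁰⁾ ∈ X, y⁽ʲ⁾ ∈ argmax_{y ∈ Y} f(x⁽ʲ⁾, y), and x⁽ʲ⁺¹⁾ the Euclidean projection of x⁽ʲ⁾ − α∇ₓf(x⁽ʲ⁾, y⁽ʲ⁾) onto X. Then for any J ∈ ℕ: (1/(J+1)) Σ_{j=0}^{J} 4L²‖x̂(x⁽ʲ⁾) − x⁽ʲ⁾‖² ≤ 2(Φ(x⁽⁰⁾) − min_{x ∈ X} g(x)) / (α(J+1)) + 2αLM². -/
lemma aux_eps {c K : ℝ} (hK : 0 ≤ K) (h : ∀ θ : ℝ, 0 < θ → θ ≤ 1 → c ≤ K * θ) : c ≤ 0 := by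
  refine le_of_forall_pos_le_add fun ε hε => ?_
  have hθpos : 0 < min 1 (ε / (K + 1)) := lt_min one_pos (div_pos hε (by linarith))
  have h1 := h _ hθpos (min_le_left _ _)
  have h2 : K * min 1 (ε / (K + 1)) ≤ ε := by
    have hm := min_le_right 1 (ε / (K + 1))
    have h0 : K * min 1 (ε / (K + 1)) ≤ K * (ε / (K + 1)) :=
      mul_le_mul_of_nonneg_left hm hK
    have h3 : K * (ε / (K + 1)) ≤ ε := by
      rw [mul_div_assoc', div_le_iff₀ (by linarith : (0:ℝ) < K + 1)]
      nlinarith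
    linarith
  linarith

set_option maxHeartbeats 1000000 in
/-- Averaged bound for the projected subgradient iterates:
`(1/(J+1)) Σ_{j=0}^{J} 4L²‖x̂(x⁽ʲ⁾) − x⁽ʲ⁾‖² ≤ 2(Φ(x⁽⁰⁾) − min_X g)/(α(J+1)) + 2αLM²`. -/
theorem stmt_11 {n m : ℕ}
    (X : Set (EuclideanSpace ℝ (Fin n))) (Y : Set (EuclideanSpace ℝ (Fin m)))
    (hXne : X.Nonempty) (hXcomp : IsCompact X) (hXconv : Convex ℝ X)
    (hYne : Y.Nonempty) (hYcomp : IsCompact Y)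
    (L M α : ℝ) (hL : 0 < L) (hM : 0 < M) (hα : 0 < α)
    (f : EuclideanSpace ℝ (Fin n) → EuclideanSpace ℝ (Fin m) → ℝ)
    (hfc : Continuous fun p : EuclideanSpace ℝ (Fin n) × EuclideanSpace ℝ (Fin m) => f p.1 p.2)
    (f' : EuclideanSpace ℝ (Fin n) → EuclideanSpace ℝ (Fin m) → EuclideanSpace ℝ (Fin n))
    (hdiff : ∀ y ∈ Y, ∀ x ∈ X, HasGradientAt (fun x' => f x' y) (f' x y) x)
    (hgradbd : ∀ x ∈ X, ∀ y ∈ Y, ‖f' x y‖ ≤ M)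
    (hquad : ∀ y ∈ Y, ∀ x₁ ∈ X, ∀ x₂ ∈ X,
      f x₂ y ≥ f x₁ y + (inner ℝ (f' x₁ y) (x₂ - x₁) : ℝ) - L / 2 * ‖x₂ - x₁‖ ^ 2)
    (g : EuclideanSpace ℝ (Fin n) → ℝ)
    (hg : ∀ x, IsGreatest ((fun y => f x y) '' Y) (g x))
    (Φ : EuclideanSpace ℝ (Fin n) → ℝ)
    (xhat : EuclideanSpace ℝ (Fin n) → EuclideanSpace ℝ (Fin n))
    (hxhatmem : ∀ x, xhat x ∈ X)
    (hxhatmin : ∀ x, ∀ z ∈ X,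
      g (xhat x) + L * ‖xhat x - x‖ ^ 2 ≤ g z + L * ‖z - x‖ ^ 2)
    (hΦ : ∀ x, Φ x = g (xhat x) + L * ‖xhat x - x‖ ^ 2)
    (gmin : ℝ) (hgmin : IsLeast (g '' X) gmin)
    (xseq : ℕ → EuclideanSpace ℝ (Fin n)) (yseq : ℕ → EuclideanSpace ℝ (Fin m))
    (hx0 : xseq 0 ∈ X)
    (hyseq : ∀ j, yseq j ∈ Y ∧ ∀ y ∈ Y, f (xseq j) y ≤ f (xseq j) (yseq j))
    (hxseqmem : ∀ j, xseq (j + 1) ∈ X)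
    (hxseqproj : ∀ j, ∀ z ∈ X,
      ‖xseq (j + 1) - (xseq j - α • f' (xseq j) (yseq j))‖ ≤
        ‖z - (xseq j - α • f' (xseq j) (yseq j))‖) :
    ∀ J : ℕ,
      (1 / ((J : ℝ) + 1)) * ∑ j ∈ Finset.range (J + 1), 4 * L ^ 2 * ‖xhat (xseq j) - xseq j‖ ^ 2 ≤
        2 * (Φ (xseq 0) - gmin) / (α * ((J : ℝ) + 1)) + 2 * α * L * M ^ 2 := by
  have hmem : ∀ j, xseq j ∈ X := by
    intro j; cases j with
    | zero => exact hx0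
    | succ k => exact hxseqmem k
  -- g equals f at the argmax
  have hgx : ∀ j, g (xseq j) = f (xseq j) (yseq j) := by
    intro j
    obtain ⟨ystar, hystar, hfy⟩ := (hg (xseq j)).1
    have h1 : f (xseq j) (yseq j) ≤ g (xseq j) :=
      (hg (xseq j)).2 ⟨yseq j, (hyseq j).1, rfl⟩
    have h2 : g (xseq j) ≤ f (xseq j) (yseq j) := by
      rw [← hfy]; exact (hyseq j).2 ystar hystar
    linarith
  -- strong-convexity-type bound: g(x̂) + (3/2)L D ≤ g(x)
  have hsc : ∀ j, g (xhat (xseq j)) + 3/2 * L * ‖xhat (xseq j) - xseq j‖ ^ 2 ≤ g (xseq j) := by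
    intro j
    set x := xseq j with hxdef
    set xh := xhat x with hxhdef
    set D := ‖xh - x‖ ^ 2 with hDdef
    have hD0 : 0 ≤ D := sq_nonneg _
    have key : ∀ θ : ℝ, 0 < θ → θ ≤ 1 →
        g xh + 3/2 * L * D - g x ≤ (L * D / 2) * θ := by
      intro θ hθ hθ1
      set z := xh + θ • (x - xh) with hzdef
      have hzX : z ∈ X := by
        have := hXconv (hxhatmem x) (hmem j) (by linarith : (0:ℝ) ≤ 1 - θ) hθ.le (by ring)
        have hzeq : (1 - θ) • xh + θ • x = z := by
          rw [hzdef]; module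
        rwa [hzeq] at this
      obtain ⟨yz, hyzY, hfyz⟩ := (hg z).1
      have hq1 := hquad yz hyzY z hzX xh (hxhatmem x)
      have hq2 := hquad yz hyzY z hzX x (hmem j)
      have hxhz : xh - z = θ • (xh - x) := by rw [hzdef]; module
      have hxz : x - z = -((1 - θ) • (xh - x)) := by rw [hzdef]; module
      have hn1 : ‖xh - z‖ ^ 2 = θ ^ 2 * D := by
        rw [hxhz, norm_smul, Real.norm_eq_abs, abs_of_pos hθ, mul_pow, ← hDdef]
      have hn2 : ‖x - z‖ ^ 2 = (1 - θ) ^ 2 * D := by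
        rw [hxz, norm_neg, norm_smul, Real.norm_eq_abs,
          abs_of_nonneg (by linarith : (0:ℝ) ≤ 1 - θ), mul_pow, ← hDdef]
      have hi1 : (inner ℝ (f' z yz) (xh - z) : ℝ) = θ * inner ℝ (f' z yz) (xh - x) := by
        rw [hxhz, real_inner_smul_right]
      have hi2 : (inner ℝ (f' z yz) (x - z) : ℝ) = -((1 - θ) * inner ℝ (f' z yz) (xh - x)) := by
        rw [hxz, inner_neg_right, real_inner_smul_right]
      have hub1 : f xh yz ≤ g xh := (hg xh).2 ⟨yz, hyzY, rfl⟩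
      have hub2 : f x yz ≤ g x := (hg x).2 ⟨yz, hyzY, rfl⟩
      -- combine with weights (1-θ) and θ
      have hcomb : g z ≤ (1 - θ) * g xh + θ * g x + L/2 * θ * (1 - θ) * D := by
        rw [← hfyz]
        have e1 := mul_le_mul_of_nonneg_left
          (by linarith [hq1, hub1] :
            f z yz + (inner ℝ (f' z yz) (xh - z) : ℝ) - L / 2 * ‖xh - z‖ ^ 2 ≤ g xh)
          (by linarith : (0:ℝ) ≤ 1 - θ)
        have e2 := mul_le_mul_of_nonneg_left
          (by linarith [hq2, hub2] :
            f z yz + (inner ℝ (f' z yz) (x - z) : ℝ) - L / 2 * ‖x - z‖ ^ 2 ≤ g x)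
          hθ.le
        rw [hi1, hn1] at e1
        rw [hi2, hn2] at e2
        linarith [e1, e2]
      clear hi1 hi2 hn1 hn2
      -- minimality of xh
      have hmin := hxhatmin x z hzX
      have hnz : ‖z - x‖ ^ 2 = (1 - θ) ^ 2 * D := by
        rw [norm_sub_rev z x]
        rw [hzdef]
        have hxz : x - (xh + θ • (x - xh)) = -((1 - θ) • (xh - x)) := by module
        rw [hxz, norm_neg, norm_smul, Real.norm_eq_abs,
          abs_of_nonneg (by linarith : (0:ℝ) ≤ 1 - θ), mul_pow, ← hDdef]
      rw [hnz, ← hxhdef, ← hDdef] at hmin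
      have h7 : θ * (g xh + 3/2 * L * D - g x) ≤ θ * ((L * D / 2) * θ) := by
        linarith [hmin, hcomb]
      exact le_of_mul_le_mul_left h7 hθ
    have := aux_eps (c := g xh + 3/2 * L * D - g x) (K := L * D / 2)
      (by positivity) key
    linarith
  -- projection inequality: ‖x̂ - x_{j+1}‖² ≤ ‖x̂ - u‖²
  have hproj : ∀ j, ‖xhat (xseq j) - xseq (j+1)‖ ^ 2 ≤
      ‖xhat (xseq j) - (xseq j - α • f' (xseq j) (yseq j))‖ ^ 2 := by
    intro j
    set u := xseq j - α • f' (xseq j) (yseq j) with hudef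
    set p := xseq (j+1) with hpdef
    set xh := xhat (xseq j) with hxhdef
    set c := (inner ℝ (p - u) (xh - p) : ℝ) with hcdef
    set d := ‖xh - p‖ ^ 2 with hddef
    have hd0 : 0 ≤ d := sq_nonneg _
    have hc0 : 0 ≤ c := by
      have key : ∀ θ : ℝ, 0 < θ → θ ≤ 1 → -2 * c ≤ d * θ := by
        intro θ hθ hθ1
        set z := p + θ • (xh - p) with hzdef
        have hzX : z ∈ X := by
          have := hXconv (hxseqmem j) (hxhatmem (xseq j))
            (by linarith : (0:ℝ) ≤ 1 - θ) hθ.le (by ring)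
          have hzeq : (1 - θ) • p + θ • xh = z := by rw [hzdef]; module
          rwa [hzeq] at this
        have hle := hxseqproj j z hzX
        have hle2 : ‖p - u‖ ^ 2 ≤ ‖z - u‖ ^ 2 := by
          apply pow_le_pow_left₀ (norm_nonneg _) hle
        have hzu : z - u = (p - u) + θ • (xh - p) := by rw [hzdef]; module
        rw [hzu, norm_add_sq_real, real_inner_smul_right, norm_smul, Real.norm_eq_abs,
          abs_of_pos hθ, mul_pow, ← hcdef, ← hddef] at hle2
        nlinarith [hle2, hθ]
      have := aux_eps (c := -2 * c) (K := d) hd0 key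
      linarith
    have hexp : ‖xh - u‖ ^ 2 = d + 2 * c + ‖p - u‖ ^ 2 := by
      have he : xh - u = (xh - p) + (p - u) := by module
      rw [he, norm_add_sq_real, hcdef, hddef, real_inner_comm]
    nlinarith [hexp, hc0, sq_nonneg ‖p - u‖]
  -- per-step descent
  have hstep : ∀ j, Φ (xseq (j+1)) ≤ Φ (xseq j)
      - 2 * α * L ^ 2 * ‖xhat (xseq j) - xseq j‖ ^ 2 + α ^ 2 * L * M ^ 2 := by
    intro j
    set x := xseq j with hxdef
    set p := xseq (j+1) with hpdef
    set xh := xhat x with hxhdef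
    set s := f' x (yseq j) with hsdef
    set D := ‖xh - x‖ ^ 2 with hDdef
    have h1 : Φ p ≤ g xh + L * ‖xh - p‖ ^ 2 := by
      rw [hΦ p]; exact hxhatmin p xh (hxhatmem x)
    have h2 := hproj j
    rw [← hxdef, ← hpdef, ← hxhdef, ← hsdef] at h2
    have h3 : ‖xh - (x - α • s)‖ ^ 2
        = D + 2 * α * (inner ℝ s (xh - x) : ℝ) + α ^ 2 * ‖s‖ ^ 2 := by
      have he : xh - (x - α • s) = (xh - x) + α • s := by module
      rw [he, norm_add_sq_real, real_inner_smul_right, real_inner_comm (xh - x) s,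
        norm_smul, Real.norm_eq_abs, abs_of_pos hα, mul_pow, ← hDdef]
      ring
    have h4 : (inner ℝ s (xh - x) : ℝ) ≤ g xh - g x + L / 2 * D := by
      have hq := hquad (yseq j) (hyseq j).1 x (hmem j) xh (hxhatmem x)
      have hub : f xh (yseq j) ≤ g xh := (hg xh).2 ⟨yseq j, (hyseq j).1, rfl⟩
      have := hgx j
      rw [← hxdef] at this
      rw [← hsdef, ← hDdef] at hq
      linarith [hq, hub]
    have h5 := hsc j
    rw [← hxdef, ← hxhdef, ← hDdef] at h5
    have h6 : ‖s‖ ^ 2 ≤ M ^ 2 := by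
      have := hgradbd x (hmem j) (yseq j) (hyseq j).1
      nlinarith [norm_nonneg s]
    have hΦx : Φ x = g xh + L * D := hΦ x
    have hD0 : (0:ℝ) ≤ D := sq_nonneg _
    have h3' : L * ‖xh - (x - α • s)‖ ^ 2
        = L * (D + 2 * α * (inner ℝ s (xh - x) : ℝ) + α ^ 2 * ‖s‖ ^ 2) := by rw [h3]
    nlinarith [mul_le_mul_of_nonneg_left h2 hL.le,
      mul_le_mul_of_nonneg_left h4 (by positivity : (0:ℝ) ≤ 2 * α * L),
      mul_le_mul_of_nonneg_left h6 (by positivity : (0:ℝ) ≤ α ^ 2 * L),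
      mul_le_mul_of_nonneg_left h5 (by positivity : (0:ℝ) ≤ 2 * α * L), h3']
  -- Φ bounded below by gmin
  have hΦlb : ∀ x, gmin ≤ Φ x := by
    intro x
    have h1 : gmin ≤ g (xhat x) := hgmin.2 ⟨xhat x, hxhatmem x, rfl⟩
    have : (0:ℝ) ≤ L * ‖xhat x - x‖ ^ 2 := by positivity
    rw [hΦ x]; linarith
  intro J
  have hJ1 : (0:ℝ) < (J:ℝ) + 1 := by positivity
  set T := ∑ j ∈ Finset.range (J + 1), ‖xhat (xseq j) - xseq j‖ ^ 2 with hTdef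
  have hsum : 2 * α * L ^ 2 * T ≤ Φ (xseq 0) - gmin + ((J:ℝ) + 1) * (α ^ 2 * L * M ^ 2) := by
    have h1 : ∑ j ∈ Finset.range (J + 1), (2 * α * L ^ 2 * ‖xhat (xseq j) - xseq j‖ ^ 2)
        ≤ ∑ j ∈ Finset.range (J + 1), (Φ (xseq j) - Φ (xseq (j+1)) + α ^ 2 * L * M ^ 2) := by
      apply Finset.sum_le_sum
      intro j _
      linarith [hstep j]
    rw [Finset.sum_add_distrib, Finset.sum_range_sub' (fun j => Φ (xseq j)),
      Finset.sum_const, Finset.card_range] at h1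
    rw [nsmul_eq_mul] at h1
    rw [hTdef, Finset.mul_sum]
    have h2 := hΦlb (xseq (J + 1))
    push_cast at h1 ⊢
    linarith
  have hLHS : (1 / ((J : ℝ) + 1)) *
      ∑ j ∈ Finset.range (J + 1), 4 * L ^ 2 * ‖xhat (xseq j) - xseq j‖ ^ 2
      = (2 / (α * ((J:ℝ) + 1))) * (2 * α * L ^ 2 * T) := by
    rw [hTdef, Finset.mul_sum, Finset.mul_sum, Finset.mul_sum]
    apply Finset.sum_congr rfl
    intro j _
    field_simp
    ring
  rw [hLHS]
  have hpos : (0:ℝ) < α * ((J:ℝ) + 1) := by positivity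
  have hmul : (2 / (α * ((J:ℝ) + 1))) * (2 * α * L ^ 2 * T)
      ≤ (2 / (α * ((J:ℝ) + 1))) * (Φ (xseq 0) - gmin + ((J:ℝ) + 1) * (α ^ 2 * L * M ^ 2)) :=
    mul_le_mul_of_nonneg_left hsum (by positivity)
  have heq : (2 / (α * ((J:ℝ) + 1))) * (Φ (xseq 0) - gmin + ((J:ℝ) + 1) * (α ^ 2 * L * M ^ 2))
      = 2 * (Φ (xseq 0) - gmin) / (α * ((J : ℝ) + 1)) + 2 * α * L * M ^ 2 := by
    field_simp
  linarith
end

section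
/- Let X ⊆ ℝⁿ be a nonempty compact convex set with diameter at most D > 0, Y ⊆ ℝᵐ a nonempty compact set, and f : ℝⁿ × ℝᵐ → ℝ continuous such that: f is C-Lipschitz on X × Y; for each y ∈ Y, x ↦ f(x, y) is differentiable with ‖∇ₓf(x, y)‖ ≤ M on X × Y; and x ↦ ∇ₓf(x, y) is L-Lipschitz on X for each y ∈ Y, with C, M, L > 0. Define g(x) := max_{y ∈ Y} f(x, y), let x̂(x) be the unique minimizer over X of x' ↦ g(x') + L‖x' − x‖², and Δ := min{LD², CD}. Fix ε > 0 and J ∈ ℕ with J + 1 ≥ 16·Δ·L·M²/ε⁴, set α := √(Δ/(L·M²·(J+1))), and run the projected subgradient iterates x⁽⁰⁾ ∈ X, y⁽ʲ⁾ ∈ argmax_{y ∈ Y} f(x⁽ʲ⁾, y), x⁽ʲ⁺¹⁾ = projection of x⁽ʲ⁾ − α∇ₓf(x⁽ʲ⁾, y⁽ʲ⁾) onto X. Then min_{0 ≤ j ≤ J} 2L‖x̂(x⁽ʲ⁾) − x⁽ʲ⁾‖ ≤ ε. -/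
set_option maxHeartbeats 1000000
open RealInnerProductSpace

lemma descent_aux {E : Type*} [NormedAddCommGroup E] [InnerProductSpace ℝ E] [CompleteSpace E]
    {s : Set E} (hs : Convex ℝ s) {φ : E → ℝ} {φ' : E → E} {L : ℝ}
    (hdiff : ∀ x ∈ s, HasGradientAt φ (φ' x) x)
    (hlip : ∀ x₁ ∈ s, ∀ x₂ ∈ s, ‖φ' x₁ - φ' x₂‖ ≤ L * ‖x₁ - x₂‖)
    {x x' : E} (hx : x ∈ s) (hx' : x' ∈ s) :
    φ x + ⟪φ' x, x' - x⟫ - L / 2 * ‖x' - x‖ ^ 2 ≤ φ x' := by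
  set d := x' - x with hd
  set ψ : ℝ → ℝ := fun t => φ (x + t • d) - t * ⟪φ' x, d⟫ + L / 2 * t ^ 2 * ‖d‖ ^ 2 with hψ
  have hmem : ∀ t ∈ Set.Icc (0:ℝ) 1, x + t • d ∈ s := by
    intro t ht
    have := hs hx hx' (by linarith [ht.2] : (0:ℝ) ≤ 1 - t) ht.1 (by ring)
    convert this using 1
    simp only [hd]
    module
  have hder : ∀ t ∈ Set.Icc (0:ℝ) 1, HasDerivAt ψ
      (⟪φ' (x + t • d), d⟫ - ⟪φ' x, d⟫ + L / 2 * (2 * t) * ‖d‖ ^ 2) t := by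
    intro t ht
    have hline : HasDerivAt (fun t : ℝ => x + t • d) d t := by
      simpa using ((hasDerivAt_id t).smul_const d).const_add x
    have h1 : HasDerivAt (fun t : ℝ => φ (x + t • d)) ⟪φ' (x + t • d), d⟫ t := by
      have := ((hdiff _ (hmem t ht)).hasFDerivAt.comp_hasDerivAt t hline)
      simpa [Function.comp_def] using this
    have h2 : HasDerivAt (fun t : ℝ => t * ⟪φ' x, d⟫) ⟪φ' x, d⟫ t := by
      simpa using (hasDerivAt_id t).mul_const ⟪φ' x, d⟫
    have h3 : HasDerivAt (fun t : ℝ => L / 2 * t ^ 2 * ‖d‖ ^ 2)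
        (L / 2 * (2 * t) * ‖d‖ ^ 2) t := by
      have h := ((hasDerivAt_pow 2 t).const_mul (L / 2)).mul_const (‖d‖ ^ 2)
      norm_num at h
      convert h using 1
    exact (h1.sub h2).add h3
  have hmono : MonotoneOn ψ (Set.Icc (0:ℝ) 1) := by
    apply monotoneOn_of_deriv_nonneg (convex_Icc 0 1)
    · exact fun t ht => (hder t ht).continuousAt.continuousWithinAt
    · intro t ht
      rw [interior_Icc] at ht
      exact (hder t (Set.mem_Icc_of_Ioo ht)).differentiableAt.differentiableWithinAt
    · intro t ht
      rw [interior_Icc] at ht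
      rw [(hder t (Set.mem_Icc_of_Ioo ht)).deriv]
      have hxt : x + t • d ∈ s := hmem t (Set.mem_Icc_of_Ioo ht)
      have hCS : |⟪φ' (x + t • d) - φ' x, d⟫| ≤ ‖φ' (x + t • d) - φ' x‖ * ‖d‖ :=
        abs_real_inner_le_norm _ _
      have hlip' : ‖φ' (x + t • d) - φ' x‖ ≤ L * (t * ‖d‖) := by
        have := hlip _ hxt _ hx
        simpa [norm_smul, abs_of_nonneg (le_of_lt ht.1)] using this
      have h1 : ⟪φ' (x + t • d), d⟫ - ⟪φ' x, d⟫ = ⟪φ' (x + t • d) - φ' x, d⟫ := by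
        rw [inner_sub_left]
      rw [h1]
      nlinarith [abs_nonneg (⟪φ' (x + t • d) - φ' x, d⟫), neg_abs_le (⟪φ' (x + t • d) - φ' x, d⟫),
        norm_nonneg d, ht.1.le, ht.2.le]
  have h01 := hmono (Set.mem_Icc.2 ⟨le_refl 0, zero_le_one⟩) (Set.mem_Icc.2 ⟨zero_le_one, le_refl 1⟩) zero_le_one
  simp only [hψ, zero_smul, add_zero, one_smul, zero_mul, one_pow, mul_one, zero_pow] at h01
  have hx'e : x + d = x' := by simp [hd]
  rw [hx'e] at h01
  linarith
lemma limit_aux {A B Q : ℝ} (hQ : 0 ≤ Q)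
    (h : ∀ t : ℝ, 0 < t → t ≤ 1 → B + (1 - t) * Q ≤ A) : B + Q ≤ A := by
  rcases eq_or_lt_of_le hQ with hQ0 | hQ0
  · have := h 1 one_pos le_rfl
    rw [← hQ0]
    simpa using this
  · by_contra hcon
    push_neg at hcon
    set δ := B + Q - A with hδdef
    have hδ : 0 < δ := by simp only [hδdef]; linarith
    set t := min 1 (δ / (2 * Q)) with ht_def
    have ht0 : 0 < t := lt_min one_pos (by positivity)
    have ht1 : t ≤ 1 := min_le_left _ _
    have htb : t * Q ≤ δ / 2 := by
      have h1 : t ≤ δ / (2 * Q) := min_le_right _ _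
      have h2 : t * Q ≤ (δ / (2 * Q)) * Q := mul_le_mul_of_nonneg_right h1 hQ
      have h3 : (δ / (2 * Q)) * Q = δ / 2 := by field_simp
      linarith
    have hk := h t ht0 ht1
    nlinarith

lemma proj_aux {E : Type*} [NormedAddCommGroup E] [InnerProductSpace ℝ E]
    {K : Set E} (hK : Convex ℝ K) {u p : E} (hp : p ∈ K)
    (hmin : ∀ z ∈ K, ‖p - u‖ ≤ ‖z - u‖) {z : E} (hz : z ∈ K) :
    ‖p - z‖ ≤ ‖u - z‖ := by
  have hinf : ‖u - p‖ = ⨅ w : K, ‖u - w‖ := by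
    haveI : Nonempty K := ⟨⟨p, hp⟩⟩
    refine le_antisymm (le_ciInf fun w => ?_) (ciInf_le (f := fun w : K => ‖u - w‖) ⟨0, fun _ ⟨_, h⟩ => h ▸ norm_nonneg _⟩ ⟨p, hp⟩)
    rw [norm_sub_rev u p, norm_sub_rev u w]
    exact hmin w w.2
  have hinner : ⟪u - p, z - p⟫ ≤ 0 :=
    ((norm_eq_iInf_iff_real_inner_le_zero hK hp).1 hinf) z hz
  have hexp : ‖u - z‖ ^ 2 = ‖u - p‖ ^ 2 + 2 * ⟪u - p, p - z⟫ + ‖p - z‖ ^ 2 := by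
    have h : u - z = (u - p) + (p - z) := by abel
    rw [h, norm_add_sq_real]
  have h2 : ⟪u - p, p - z⟫ = -⟪u - p, z - p⟫ := by
    rw [← inner_neg_right]; congr 1; abel
  nlinarith [norm_nonneg (u - p), norm_nonneg (p - z), norm_nonneg (u - z), sq_nonneg (‖u - p‖)]

/-- `O(ε⁻⁴)` iteration complexity of the projected subgradient algorithm:
if `J + 1 ≥ 16ΔLM²/ε⁴` and `α = √(Δ/(LM²(J+1)))`, then
`min_{0 ≤ j ≤ J} 2L‖x̂(x⁽ʲ⁾) − x⁽ʲ⁾‖ ≤ ε`, i.e. some iterate is `ε`-near-stationary. -/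
theorem stmt_16 {n m : ℕ}
    (X : Set (EuclideanSpace ℝ (Fin n))) (Y : Set (EuclideanSpace ℝ (Fin m)))
    (hXne : X.Nonempty) (hXcomp : IsCompact X) (hXconv : Convex ℝ X)
    (hYne : Y.Nonempty) (hYcomp : IsCompact Y)
    (D C M L : ℝ) (hD : 0 < D) (hC : 0 < C) (hM : 0 < M) (hL : 0 < L)
    (hdiam : ∀ x₁ ∈ X, ∀ x₂ ∈ X, ‖x₁ - x₂‖ ≤ D)
    (f : EuclideanSpace ℝ (Fin n) → EuclideanSpace ℝ (Fin m) → ℝ)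
    (hfc : Continuous fun p : EuclideanSpace ℝ (Fin n) × EuclideanSpace ℝ (Fin m) => f p.1 p.2)
    (hflip : ∀ x₁ ∈ X, ∀ y₁ ∈ Y, ∀ x₂ ∈ X, ∀ y₂ ∈ Y,
      |f x₁ y₁ - f x₂ y₂| ≤ C * dist ((x₁, y₁) : EuclideanSpace ℝ (Fin n) × EuclideanSpace ℝ (Fin m)) (x₂, y₂))
    (f' : EuclideanSpace ℝ (Fin n) → EuclideanSpace ℝ (Fin m) → EuclideanSpace ℝ (Fin n))
    (hdiff : ∀ y ∈ Y, ∀ x ∈ X, HasGradientAt (fun x' => f x' y) (f' x y) x)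
    (hgradbd : ∀ x ∈ X, ∀ y ∈ Y, ‖f' x y‖ ≤ M)
    (hgradlip : ∀ y ∈ Y, ∀ x₁ ∈ X, ∀ x₂ ∈ X, ‖f' x₁ y - f' x₂ y‖ ≤ L * ‖x₁ - x₂‖)
    (g : EuclideanSpace ℝ (Fin n) → ℝ)
    (hg : ∀ x, IsGreatest ((fun y => f x y) '' Y) (g x))
    (xhat : EuclideanSpace ℝ (Fin n) → EuclideanSpace ℝ (Fin n))
    (hxhatmem : ∀ x, xhat x ∈ X)
    (hxhatmin : ∀ x, ∀ z ∈ X,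
      g (xhat x) + L * ‖xhat x - x‖ ^ 2 ≤ g z + L * ‖z - x‖ ^ 2)
    (Δ : ℝ) (hΔ : Δ = min (L * D ^ 2) (C * D))
    (ε : ℝ) (hε : 0 < ε)
    (J : ℕ) (hJ : (16 : ℝ) * Δ * L * M ^ 2 / ε ^ 4 ≤ (J : ℝ) + 1)
    (α : ℝ) (hα : α = Real.sqrt (Δ / (L * M ^ 2 * ((J : ℝ) + 1))))
    (xseq : ℕ → EuclideanSpace ℝ (Fin n)) (yseq : ℕ → EuclideanSpace ℝ (Fin m))
    (hx0 : xseq 0 ∈ X)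
    (hyseq : ∀ j, yseq j ∈ Y ∧ ∀ y ∈ Y, f (xseq j) y ≤ f (xseq j) (yseq j))
    (hxseqmem : ∀ j, xseq (j + 1) ∈ X)
    (hxseqproj : ∀ j, ∀ z ∈ X,
      ‖xseq (j + 1) - (xseq j - α • f' (xseq j) (yseq j))‖ ≤
        ‖z - (xseq j - α • f' (xseq j) (yseq j))‖) :
    ∃ j ≤ J, 2 * L * ‖xhat (xseq j) - xseq j‖ ≤ ε := by
  -- basic facts
  have hΔpos : 0 < Δ := by rw [hΔ]; exact lt_min (by positivity) (by positivity)
  have hK : (0:ℝ) < (J : ℝ) + 1 := by positivity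
  have hαpos : 0 < α := by rw [hα]; exact Real.sqrt_pos.2 (by positivity)
  have hαsq : α ^ 2 = Δ / (L * M ^ 2 * ((J : ℝ) + 1)) := by
    rw [hα]; exact Real.sq_sqrt (by positivity)
  have hyY : ∀ j, yseq j ∈ Y := fun j => (hyseq j).1
  have hxmem : ∀ j, xseq j ∈ X := by
    intro j; cases j with
    | zero => exact hx0
    | succ k => exact hxseqmem k
  have hglef : ∀ x, ∀ y ∈ Y, f x y ≤ g x := fun x y hy => (hg x).2 ⟨y, hy, rfl⟩
  have hgeq : ∀ j, g (xseq j) = f (xseq j) (yseq j) := by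
    intro j
    obtain ⟨y, hy, hey⟩ := (hg (xseq j)).1
    exact le_antisymm (hey ▸ (hyseq j).2 y hy) (hglef _ _ (hyY j))
  have hdescent : ∀ y ∈ Y, ∀ x ∈ X, ∀ x' ∈ X,
      f x y + ⟪f' x y, x' - x⟫ - L / 2 * ‖x' - x‖ ^ 2 ≤ f x' y :=
    fun y hy x hx x' hx' => descent_aux hXconv (fun x hx => hdiff y hy x hx)
      (fun x₁ h1 x₂ h2 => hgradlip y hy x₁ h1 x₂ h2) hx hx'
  -- weak convexity of g
  have hgwc : ∀ z ∈ X, ∀ w ∈ X, ∀ t : ℝ, 0 ≤ t → t ≤ 1 →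
      g (t • z + (1 - t) • w) ≤ t * g z + (1 - t) * g w + L / 2 * (t * (1 - t)) * ‖z - w‖ ^ 2 := by
    intro z hz w hw t ht0 ht1
    set xm := t • z + (1 - t) • w with hxm_def
    have hxm : xm ∈ X := hXconv hz hw ht0 (by linarith) (by ring)
    obtain ⟨y, hy, hey⟩ := (hg xm).1
    have h1 := hdescent y hy xm hxm z hz
    have h2 := hdescent y hy xm hxm w hw
    have hzm : z - xm = (1 - t) • (z - w) := by rw [hxm_def]; module
    have hwm : w - xm = (-t) • (z - w) := by rw [hxm_def]; module
    have hiz : ⟪f' xm y, z - xm⟫ = (1 - t) * ⟪f' xm y, z - w⟫ := by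
      rw [hzm, real_inner_smul_right]
    have hiw : ⟪f' xm y, w - xm⟫ = -t * ⟪f' xm y, z - w⟫ := by
      rw [hwm, real_inner_smul_right]
    have hnz : ‖z - xm‖ ^ 2 = (1 - t) ^ 2 * ‖z - w‖ ^ 2 := by
      rw [hzm, norm_smul, mul_pow, Real.norm_eq_abs, sq_abs]
    have hnw : ‖w - xm‖ ^ 2 = t ^ 2 * ‖z - w‖ ^ 2 := by
      rw [hwm, norm_smul, mul_pow, Real.norm_eq_abs, abs_neg, sq_abs]
    rw [hiz, hnz] at h1
    rw [hiw, hnw] at h2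
    have hfz : f z y ≤ g z := hglef z y hy
    have hfw : f w y ≤ g w := hglef w y hy
    rw [← hey]
    nlinarith [mul_le_mul_of_nonneg_left h1 ht0,
      mul_le_mul_of_nonneg_left h2 (by linarith : (0:ℝ) ≤ 1 - t),
      mul_le_mul_of_nonneg_left hfz ht0,
      mul_le_mul_of_nonneg_left hfw (by linarith : (0:ℝ) ≤ 1 - t)]
  -- strong minimality of xhat
  have hstrong : ∀ x : EuclideanSpace ℝ (Fin n), ∀ z ∈ X,
      g (xhat x) + L * ‖xhat x - x‖ ^ 2 + L / 2 * ‖z - xhat x‖ ^ 2 ≤ g z + L * ‖z - x‖ ^ 2 := by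
    intro x z hz
    set p := xhat x with hp_def
    clear_value p
    have hpX : p ∈ X := by rw [hp_def]; exact hxhatmem x
    have hQ : (0:ℝ) ≤ ‖z - p‖ ^ 2 := by positivity
    have key : ∀ t : ℝ, 0 < t → t ≤ 1 →
        (g p + L * ‖p - x‖ ^ 2) + (1 - t) * (L / 2 * ‖z - p‖ ^ 2) ≤ g z + L * ‖z - x‖ ^ 2 := by
      intro t ht0 ht1
      have hmidX : t • z + (1 - t) • p ∈ X := hXconv hz hpX ht0.le (by linarith) (by ring)
      have hmin := hxhatmin x (t • z + (1 - t) • p) hmidX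
      have hgw := hgwc z hz p hpX t ht0.le ht1
      have hid : ‖(t • z + (1 - t) • p) - x‖ ^ 2
          = t * ‖z - x‖ ^ 2 + (1 - t) * ‖p - x‖ ^ 2 - t * (1 - t) * ‖z - p‖ ^ 2 := by
        have e1 : (t • z + (1 - t) • p) - x = t • (z - x) + (1 - t) • (p - x) := by module
        have e2 : ‖z - p‖ ^ 2 = ‖z - x‖ ^ 2 - 2 * ⟪z - x, p - x⟫ + ‖p - x‖ ^ 2 := by
          have e3 : z - p = (z - x) - (p - x) := by abel
          rw [e3, norm_sub_sq_real]
        rw [e1, norm_add_sq_real, real_inner_smul_left, real_inner_smul_right, e2,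
          norm_smul, norm_smul, Real.norm_eq_abs, Real.norm_eq_abs,
          abs_of_nonneg ht0.le, abs_of_nonneg (by linarith : (0:ℝ) ≤ 1 - t)]
        ring
      rw [hid, ← hp_def] at hmin
      refine le_of_mul_le_mul_left ?_ ht0
      nlinarith [hmin, hgw]
    have := limit_aux (by positivity : (0:ℝ) ≤ L / 2 * ‖z - p‖ ^ 2) key
    linarith
  -- per-step descent of the Moreau envelope
  have hv : ∀ j, ‖f' (xseq j) (yseq j)‖ ≤ M := fun j => hgradbd _ (hxmem j) _ (hyY j)
  have hkey : ∀ j : ℕ,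
      g (xhat (xseq (j + 1))) + L * ‖xhat (xseq (j + 1)) - xseq (j + 1)‖ ^ 2 ≤
        g (xhat (xseq j)) + L * ‖xhat (xseq j) - xseq j‖ ^ 2
          - 2 * α * L ^ 2 * ‖xhat (xseq j) - xseq j‖ ^ 2 + α ^ 2 * L * M ^ 2 := by
    intro j
    set x := xseq j with hx_def
    set x1 := xseq (j + 1) with hx1_def
    set p := xhat x with hp_def
    set v := f' x (yseq j) with hv_def
    have hpX : p ∈ X := hxhatmem x
    have h1 : g (xhat x1) + L * ‖xhat x1 - x1‖ ^ 2 ≤ g p + L * ‖p - x1‖ ^ 2 :=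
      hxhatmin x1 p hpX
    have h2 : ‖x1 - p‖ ≤ ‖(x - α • v) - p‖ := by
      exact proj_aux hXconv (hxseqmem j) (fun z hz => hxseqproj j z hz) hpX
    have h2sq : ‖x1 - p‖ ^ 2 ≤ ‖(x - α • v) - p‖ ^ 2 :=
      pow_le_pow_left₀ (norm_nonneg _) h2 2
    have h3 : ‖(x - α • v) - p‖ ^ 2
        = ‖x - p‖ ^ 2 - 2 * α * ⟪v, x - p⟫ + α ^ 2 * ‖v‖ ^ 2 := by
      have e1 : (x - α • v) - p = (x - p) - α • v := by abel
      rw [e1, norm_sub_sq_real, real_inner_smul_right, norm_smul, Real.norm_eq_abs,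
        mul_pow, sq_abs, real_inner_comm]
      ring
    have h4 : ⟪v, p - x⟫ ≤ g p - g x + L / 2 * ‖p - x‖ ^ 2 := by
      have := hdescent (yseq j) (hyY j) x (hxmem j) p hpX
      have hfp : f p (yseq j) ≤ g p := hglef p (yseq j) (hyY j)
      have hfx : f x (yseq j) = g x := (hgeq j).symm
      rw [hfx] at this
      linarith
    have h5 : g p + L * ‖p - x‖ ^ 2 + L / 2 * ‖x - p‖ ^ 2 ≤ g x := by
      have := hstrong x x (hxmem j)
      simpa using this
    have hnrev : ‖x - p‖ = ‖p - x‖ := norm_sub_rev x p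
    have h6 : ⟪v, x - p⟫ = -⟪v, p - x⟫ := by
      rw [← inner_neg_right]; congr 1; abel
    have hvsq : ‖v‖ ^ 2 ≤ M ^ 2 := pow_le_pow_left₀ (norm_nonneg _) (hv j) 2
    have hnn : (0:ℝ) ≤ ‖p - x‖ ^ 2 := by positivity
    have hrev2 : ‖xhat x - x‖ = ‖p - x‖ := rfl
    rw [h3, h6, hnrev] at h2sq
    rw [hnrev] at h5
    rw [norm_sub_rev p x1] at h1
    linarith [h1, mul_le_mul_of_nonneg_left h2sq hL.le,
      mul_le_mul_of_nonneg_left h4 (by positivity : (0:ℝ) ≤ 2 * α * L),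
      mul_le_mul_of_nonneg_left h5 (by positivity : (0:ℝ) ≤ 2 * α * L),
      mul_le_mul_of_nonneg_left hvsq (by positivity : (0:ℝ) ≤ α ^ 2 * L)]
  
  -- telescoping sum
  have hsum : ∀ N : ℕ,
      g (xhat (xseq N)) + L * ‖xhat (xseq N) - xseq N‖ ^ 2
        + 2 * α * L ^ 2 * ∑ j ∈ Finset.range N, ‖xhat (xseq j) - xseq j‖ ^ 2
      ≤ g (xhat (xseq 0)) + L * ‖xhat (xseq 0) - xseq 0‖ ^ 2 + (N : ℝ) * (α ^ 2 * L * M ^ 2) := by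
    intro N
    induction N with
    | zero => simp
    | succ N ih =>
      have hk := hkey N
      rw [Finset.sum_range_succ]
      push_cast
      push_cast at ih
      linarith
  -- gap bound : Φ0 ≤ Φ_{J+1} + Δ
  have hgap : g (xhat (xseq 0)) + L * ‖xhat (xseq 0) - xseq 0‖ ^ 2
      ≤ g (xhat (xseq (J + 1))) + L * ‖xhat (xseq (J + 1)) - xseq (J + 1)‖ ^ 2 + Δ := by
    set q := xhat (xseq (J + 1)) with hq_def
    clear_value q
    have hqX : q ∈ X := by rw [hq_def]; exact hxhatmem _
    have h0 := hxhatmin (xseq 0) q hqX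
    have hb1 : ‖q - xseq 0‖ ≤ D := hdiam _ hqX _ hx0
    have hb1sq : ‖q - xseq 0‖ ^ 2 ≤ D ^ 2 := by
      nlinarith [norm_nonneg (q - xseq 0)]
    have hqnn : (0:ℝ) ≤ ‖q - xseq (J + 1)‖ ^ 2 := by positivity
    have hLD : g (xhat (xseq 0)) + L * ‖xhat (xseq 0) - xseq 0‖ ^ 2
        ≤ g q + L * ‖q - xseq (J + 1)‖ ^ 2 + L * D ^ 2 := by
      nlinarith [h0]
    have h0' := hxhatmin (xseq 0) (xseq 0) hx0
    obtain ⟨y0, hy0, hey0⟩ := (hg (xseq 0)).1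
    have hfq : f q y0 ≤ g q := hglef _ _ hy0
    have hlip := hflip (xseq 0) hx0 y0 hy0 q hqX y0 hy0
    have hdist : dist ((xseq 0, y0) : EuclideanSpace ℝ (Fin n) × EuclideanSpace ℝ (Fin m))
        (q, y0) ≤ D := by
      rw [Prod.dist_eq]
      simp only [dist_self]
      rw [max_eq_left dist_nonneg, dist_eq_norm]
      exact hdiam _ hx0 _ hqX
    have hCdist : C * dist ((xseq 0, y0) : EuclideanSpace ℝ (Fin n) × EuclideanSpace ℝ (Fin m))
        (q, y0) ≤ C * D := mul_le_mul_of_nonneg_left hdist hC.le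
    have habs := abs_le.1 hlip
    have hCD : g (xhat (xseq 0)) + L * ‖xhat (xseq 0) - xseq 0‖ ^ 2
        ≤ g q + L * ‖q - xseq (J + 1)‖ ^ 2 + C * D := by
      have hx00 : ‖xseq 0 - xseq 0‖ = 0 := by simp
      rw [hx00] at h0'
      have : f (xseq 0) y0 = g (xseq 0) := hey0
      nlinarith [habs.1, habs.2]
    have hmin' : g (xhat (xseq 0)) + L * ‖xhat (xseq 0) - xseq 0‖ ^ 2
        - (g q + L * ‖q - xseq (J + 1)‖ ^ 2) ≤ min (L * D ^ 2) (C * D) :=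
      le_min (by linarith) (by linarith)
    rw [← hΔ] at hmin'
    linarith
  -- pick the minimizing index
  obtain ⟨j0, hj0mem, hj0min⟩ := Finset.exists_min_image (Finset.range (J + 1))
    (fun j => ‖xhat (xseq j) - xseq j‖) ⟨0, Finset.mem_range.2 (Nat.succ_pos J)⟩
  refine ⟨j0, Nat.lt_succ_iff.1 (Finset.mem_range.1 hj0mem), ?_⟩
  set d0 := ‖xhat (xseq j0) - xseq j0‖ with hd0_def
  have hd0 : 0 ≤ d0 := norm_nonneg _
  have hcard : ((J : ℝ) + 1) * d0 ^ 2
      ≤ ∑ j ∈ Finset.range (J + 1), ‖xhat (xseq j) - xseq j‖ ^ 2 := by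
    have h1 : ∀ j ∈ Finset.range (J + 1), d0 ^ 2 ≤ ‖xhat (xseq j) - xseq j‖ ^ 2 :=
      fun j hj => pow_le_pow_left₀ hd0 (hj0min j hj) 2
    calc ((J : ℝ) + 1) * d0 ^ 2 = ∑ _j ∈ Finset.range (J + 1), d0 ^ 2 := by
          rw [Finset.sum_const, Finset.card_range]; push_cast; ring
      _ ≤ _ := Finset.sum_le_sum h1
  have hS := hsum (J + 1)
  push_cast at hS
  have hSd : 2 * α * L ^ 2 * (((J : ℝ) + 1) * d0 ^ 2)
      ≤ 2 * α * L ^ 2 * ∑ j ∈ Finset.range (J + 1), ‖xhat (xseq j) - xseq j‖ ^ 2 :=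
    mul_le_mul_of_nonneg_left hcard (by positivity)
  have hmain : 2 * α * L ^ 2 * (((J : ℝ) + 1) * d0 ^ 2)
      ≤ Δ + ((J : ℝ) + 1) * (α ^ 2 * L * M ^ 2) := by linarith
  have hΔeq : Δ = α ^ 2 * (L * M ^ 2 * ((J : ℝ) + 1)) := by
    rw [hαsq]; field_simp
  have h' : (2 * α * L * ((J : ℝ) + 1)) * (L * d0 ^ 2)
      ≤ (2 * α * L * ((J : ℝ) + 1)) * (α * M ^ 2) := by
    rw [hΔeq] at hmain
    nlinarith [hmain]
  have hLd : L * d0 ^ 2 ≤ α * M ^ 2 :=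
    le_of_mul_le_mul_left h' (by positivity)
  have hαle : α ≤ ε ^ 2 / (4 * L * M ^ 2) := by
    rw [hα]
    have hJ' : 16 * Δ * L * M ^ 2 ≤ ε ^ 4 * ((J : ℝ) + 1) := by
      have := (div_le_iff₀ (by positivity : (0:ℝ) < ε ^ 4)).1 hJ
      linarith
    have hle : Δ / (L * M ^ 2 * ((J : ℝ) + 1)) ≤ (ε ^ 2 / (4 * L * M ^ 2)) ^ 2 := by
      rw [div_pow, div_le_div_iff₀ (by positivity) (by positivity)]
      have := mul_le_mul_of_nonneg_left hJ' (by positivity : (0:ℝ) ≤ L * M ^ 2)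
      nlinarith [this]
    calc Real.sqrt (Δ / (L * M ^ 2 * ((J : ℝ) + 1)))
        ≤ Real.sqrt ((ε ^ 2 / (4 * L * M ^ 2)) ^ 2) := Real.sqrt_le_sqrt hle
      _ = ε ^ 2 / (4 * L * M ^ 2) := Real.sqrt_sq (by positivity)
  have h4 : α * (4 * L * M ^ 2) ≤ ε ^ 2 := by
    rw [le_div_iff₀ (by positivity)] at hαle
    linarith
  have hfin : (2 * L * d0) ^ 2 ≤ ε ^ 2 := by
    have := mul_le_mul_of_nonneg_left hLd (by positivity : (0:ℝ) ≤ 4 * L)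
    nlinarith [this, h4]
  nlinarith [hfin, hε, mul_nonneg (mul_nonneg (by norm_num : (0:ℝ) ≤ 2) hL.le) hd0]
end
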